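/- If every edge relation of a phase automaton is contained in the transition relation (δ q p v ⊆ TR for all q, p, v) and there exists a phase characterization assignment φ making the automaton inductive and safe with respect to P, then TS is safe with respect to P, and moreover the reachable-at-phase sets satisfy R q v ⊆ φ q v ⊆ P v for every phase q and valuation v. -/
import Mathlib


/-- σ is reachable at phase q under valuation v. -/
def ReachAt {S V Q : Type*} (Init : Set S) (TR : Set (S × S)) (ι : Q)
    (δ : Q → Q → V → Set (S × S)) (q : Q) (v : V) : Set S :=
  {σ | ∃ (n : ℕ) (τ : ℕ → S) (qs : ℕ → Q),
    τ 0 ∈ Init ∧ (∀ i < n, (τ i, τ (i + 1)) ∈ TR) ∧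
    qs 0 = ι ∧ (∀ i < n, (τ i, τ (i + 1)) ∈ δ (qs i) (qs (i + 1)) v) ∧
    τ n = σ ∧ qs n = q}

/-- If edges are contained in TR and φ makes the automaton inductive and safe
    w.r.t. P, then TS is safe w.r.t. P and R q v ⊆ φ q v ⊆ P v. -/
theorem safe_inductive_automaton_implies_ts_safety_and_sandwich
    {S V Q : Type*}
    (Init : Set S) (TR : Set (S × S)) (ι : Q)
    (δ : Q → Q → V → Set (S × S)) (φ : Q → V → Set S) (P : V → Set S)
    (hsub : ∀ q p v, δ q p v ⊆ TR)
    (hinit : ∀ v, Init ⊆ φ ι v)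
    (hind : ∀ q p v σ σ', σ ∈ φ q v → (σ, σ') ∈ δ q p v → σ' ∈ φ p v)
    (hcov : ∀ q v σ σ', σ ∈ φ q v → (σ, σ') ∈ TR → ∃ p, (σ, σ') ∈ δ q p v)
    (hsafe : ∀ q v, φ q v ⊆ P v) :
    (∀ σ : S,
      (∃ (n : ℕ) (τ : ℕ → S), τ 0 ∈ Init ∧ (∀ i < n, (τ i, τ (i + 1)) ∈ TR) ∧ τ n = σ) →
      ∀ v : V, σ ∈ P v) ∧
    (∀ q v, ReachAt Init TR ι δ q v ⊆ φ q v ∧ φ q v ⊆ P v) := by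
  have key : ∀ (v : V) (n : ℕ) (τ : ℕ → S), τ 0 ∈ Init →
      (∀ i < n, (τ i, τ (i + 1)) ∈ TR) → ∃ q, τ n ∈ φ q v := by
    intro v n
    induction n with
    | zero => intro τ h0 _; exact ⟨ι, hinit v h0⟩
    | succ n ih =>
      intro τ h0 hstep
      obtain ⟨q, hq⟩ := ih τ h0 (fun i hi => hstep i (Nat.lt_succ_of_lt hi))
      obtain ⟨p, hp⟩ := hcov q v _ _ hq (hstep n (Nat.lt_succ_self n))
      exact ⟨p, hind q p v _ _ hq hp⟩
  constructor
  · rintro σ ⟨n, τ, h0, hstep, rfl⟩ v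
    obtain ⟨q, hq⟩ := key v n τ h0 hstep
    exact hsafe q v hq
  · intro q v
    refine ⟨?_, hsafe q v⟩
    rintro σ ⟨n, τ, qs, h0, hTR, hι, hδ, rfl, rfl⟩
    clear hsub hcov hsafe
    induction n with
    | zero => exact hι ▸ hinit v h0
    | succ n ih =>
      exact hind _ _ v _ _ (ih (fun i hi => hTR i (Nat.lt_succ_of_lt hi)) (fun i hi => hδ i (Nat.lt_succ_of_lt hi)))
        (hδ n (Nat.lt_succ_self n))
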